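/- arXiv:1507.08430 — 8 statements merged into one kernel-verified Lean document; each statement's English description precedes it below -/
import Mathlib

section
/- Let A = (1, 20, 200, 1800), B = (1, 6, 30, 60), and C = (40, 60, 10, 1), each viewed as finite sequences of nonnegative integers (extended by zeros). Then A, B, C are log-concave with no internal zeros, A and B are weakly synchronized, but the convolution sequences A*C and B*C are NOT weakly synchronized; specifically, with D = A*C and E = B*C, one has D_1·E_3 + D_3·E_1 > 2·D_2·E_2. -/
def LogConcave (a : ℤ → ℝ) : Prop := ∀ k : ℤ, a (k - 1) * a (k + 1) ≤ a k ^ 2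

def NoInternalZeros (a : ℤ → ℝ) : Prop :=
  ∀ i j k : ℤ, i < j → 0 < a i * a j → i ≤ k → k ≤ j → 0 < a k

def Nonneg (a : ℤ → ℝ) : Prop := ∀ k : ℤ, 0 ≤ a k

def Sync (a b : ℤ → ℝ) : Prop :=
  ∀ k : ℤ, a (k - 1) * b (k + 1) ≤ a k * b k ∧ a (k + 1) * b (k - 1) ≤ a k * b k

def WeakSync (a b : ℤ → ℝ) : Prop :=
  ∀ k : ℤ, a (k - 1) * b (k + 1) + a (k + 1) * b (k - 1) ≤ 2 * (a k * b k)

def PartSync (a b : ℤ → ℝ) : Prop :=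
  ∀ m n : ℤ, n ≤ m →
    a (m + 1) * b (n - 1) + a (n - 1) * b (m + 1) ≤ a m * b n + a n * b m

noncomputable def conv (a b : ℤ → ℝ) : ℤ → ℝ := fun n => ∑ᶠ k : ℤ, a k * b (n - k)

def seqA : ℤ → ℝ := fun k => if k = 0 then 1 else if k = 1 then 20 else if k = 2 then 200 else if k = 3 then 1800 else 0
def seqB : ℤ → ℝ := fun k => if k = 0 then 1 else if k = 1 then 6 else if k = 2 then 30 else if k = 3 then 60 else 0
def seqC : ℤ → ℝ := fun k => if k = 0 then 40 else if k = 1 then 60 else if k = 2 then 10 else if k = 3 then 1 else 0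

lemma vanishA : ∀ k : ℤ, k < 0 ∨ 3 < k → seqA k = 0 := by
  intro k hk; unfold seqA; split_ifs <;> first | rfl | (exfalso; omega)
lemma vanishB : ∀ k : ℤ, k < 0 ∨ 3 < k → seqB k = 0 := by
  intro k hk; unfold seqB; split_ifs <;> first | rfl | (exfalso; omega)
lemma vanishC : ∀ k : ℤ, k < 0 ∨ 3 < k → seqC k = 0 := by
  intro k hk; unfold seqC; split_ifs <;> first | rfl | (exfalso; omega)

lemma conv_eval (a c : ℤ → ℝ) (ha : ∀ k : ℤ, k < 0 ∨ 3 < k → a k = 0) (n : ℤ) :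
    conv a c n = a 0 * c n + a 1 * c (n - 1) + a 2 * c (n - 2) + a 3 * c (n - 3) := by
  have h : conv a c n = ∑ k ∈ ({0,1,2,3} : Finset ℤ), a k * c (n - k) := by
    apply finsum_eq_finset_sum_of_support_subset
    intro k hk
    simp only [Function.mem_support] at hk
    simp only [Finset.coe_insert, Finset.coe_singleton, Set.mem_insert_iff,
      Set.mem_singleton_iff]
    by_contra h
    push_neg at h
    exact hk (by rw [ha k (by omega)]; ring)
  rw [h]
  norm_num [Finset.sum_insert, Finset.mem_insert]
  ring

lemma lcA : LogConcave seqA := by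
  intro k
  by_cases hk : -1 ≤ k ∧ k ≤ 4
  · obtain ⟨h1, h2⟩ := hk; interval_cases k <;> norm_num [seqA]
  · rw [not_and_or] at hk; push_neg at hk
    rw [vanishA (k-1) (by omega), vanishA (k+1) (by omega), vanishA k (by omega)]
    norm_num

lemma lcB : LogConcave seqB := by
  intro k
  by_cases hk : -1 ≤ k ∧ k ≤ 4
  · obtain ⟨h1, h2⟩ := hk; interval_cases k <;> norm_num [seqB]
  · rw [not_and_or] at hk; push_neg at hk
    rw [vanishB (k-1) (by omega), vanishB (k+1) (by omega), vanishB k (by omega)]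
    norm_num

lemma lcC : LogConcave seqC := by
  intro k
  by_cases hk : -1 ≤ k ∧ k ≤ 4
  · obtain ⟨h1, h2⟩ := hk; interval_cases k <;> norm_num [seqC]
  · rw [not_and_or] at hk; push_neg at hk
    rw [vanishC (k-1) (by omega), vanishC (k+1) (by omega), vanishC k (by omega)]
    norm_num

lemma nizA : NoInternalZeros seqA := by
  intro i j k hij hpos hik hkj
  have hi : ¬ (i < 0 ∨ 3 < i) := fun h => by rw [vanishA i h] at hpos; simp at hpos
  have hj : ¬ (j < 0 ∨ 3 < j) := fun h => by
    rw [vanishA j h] at hpos; simp at hpos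
  have h1 : 0 ≤ k := by omega
  have h2 : k ≤ 3 := by omega
  interval_cases k <;> norm_num [seqA]

lemma nizB : NoInternalZeros seqB := by
  intro i j k hij hpos hik hkj
  have hi : ¬ (i < 0 ∨ 3 < i) := fun h => by rw [vanishB i h] at hpos; simp at hpos
  have hj : ¬ (j < 0 ∨ 3 < j) := fun h => by
    rw [vanishB j h] at hpos; simp at hpos
  have h1 : 0 ≤ k := by omega
  have h2 : k ≤ 3 := by omega
  interval_cases k <;> norm_num [seqB]

lemma nizC : NoInternalZeros seqC := by
  intro i j k hij hpos hik hkj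
  have hi : ¬ (i < 0 ∨ 3 < i) := fun h => by rw [vanishC i h] at hpos; simp at hpos
  have hj : ¬ (j < 0 ∨ 3 < j) := fun h => by
    rw [vanishC j h] at hpos; simp at hpos
  have h1 : 0 ≤ k := by omega
  have h2 : k ≤ 3 := by omega
  interval_cases k <;> norm_num [seqC]

lemma wsAB : WeakSync seqA seqB := by
  intro k
  by_cases hk : -1 ≤ k ∧ k ≤ 4
  · obtain ⟨h1, h2⟩ := hk; interval_cases k <;> norm_num [seqA, seqB]
  · rw [not_and_or] at hk; push_neg at hk
    rw [vanishA (k-1) (by omega), vanishA (k+1) (by omega), vanishA k (by omega)]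
    norm_num

lemma hD1 : conv seqA seqC 1 = 860 := by
  rw [conv_eval _ _ vanishA]; norm_num [seqA, seqC]
lemma hD2 : conv seqA seqC 2 = 9210 := by
  rw [conv_eval _ _ vanishA]; norm_num [seqA, seqC]
lemma hD3 : conv seqA seqC 3 = 84201 := by
  rw [conv_eval _ _ vanishA]; norm_num [seqA, seqC]
lemma hE1 : conv seqB seqC 1 = 300 := by
  rw [conv_eval _ _ vanishB]; norm_num [seqB, seqC]
lemma hE2 : conv seqB seqC 2 = 1570 := by
  rw [conv_eval _ _ vanishB]; norm_num [seqB, seqC]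
lemma hE3 : conv seqB seqC 3 = 4261 := by
  rw [conv_eval _ _ vanishB]; norm_num [seqB, seqC]

lemma keyineq : 2 * (conv seqA seqC 2 * conv seqB seqC 2) <
    conv seqA seqC 1 * conv seqB seqC 3 + conv seqA seqC 3 * conv seqB seqC 1 := by
  rw [hD1, hD2, hD3, hE1, hE2, hE3]; norm_num

lemma notws : ¬ WeakSync (conv seqA seqC) (conv seqB seqC) := by
  intro h
  have h2 := h 2
  norm_num at h2
  rw [hD1, hD2, hD3, hE1, hE2, hE3] at h2
  linarith

theorem stmt0 :
    let A : ℤ → ℝ := fun k => if k = 0 then 1 else if k = 1 then 20 else if k = 2 then 200 else if k = 3 then 1800 else 0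
    let B : ℤ → ℝ := fun k => if k = 0 then 1 else if k = 1 then 6 else if k = 2 then 30 else if k = 3 then 60 else 0
    let C : ℤ → ℝ := fun k => if k = 0 then 40 else if k = 1 then 60 else if k = 2 then 10 else if k = 3 then 1 else 0
    let D : ℤ → ℝ := conv A C
    let E : ℤ → ℝ := conv B C
    LogConcave A ∧ NoInternalZeros A ∧
    LogConcave B ∧ NoInternalZeros B ∧
    LogConcave C ∧ NoInternalZeros C ∧
    WeakSync A B ∧ ¬ WeakSync D E ∧
    2 * (D 2 * E 2) < D 1 * E 3 + D 3 * E 1 := by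
  exact ⟨lcA, nizA, lcB, nizB, lcC, nizC, wsAB, notws, keyineq⟩
end

section
/- The sequences A = (1, 2, 3), B = (1, 3, 8), C = (1, 4, 15) (extended by zeros) satisfy: A and B are partially synchronized, B and C are partially synchronized, but A and C are not partially synchronized. Hence the partial synchronicity relation is not transitive. -/
def F3 (x y z : ℝ) : ℤ → ℝ := fun k => if k = 0 then x else if k = 1 then y else if k = 2 then z else 0

lemma F3_nonneg {x y z : ℝ} (hx : 0 ≤ x) (hy : 0 ≤ y) (hz : 0 ≤ z) (k : ℤ) :
    0 ≤ F3 x y z k := by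
  unfold F3; split_ifs <;> first | assumption | exact le_refl 0

lemma F3_zero {x y z : ℝ} {k : ℤ} (h : k < 0 ∨ 2 < k) : F3 x y z k = 0 := by
  unfold F3
  rw [if_neg, if_neg, if_neg] <;> omega

lemma partSync_F3 {x0 x1 x2 y0 y1 y2 : ℝ}
    (hx0 : 0 ≤ x0) (hx1 : 0 ≤ x1) (hx2 : 0 ≤ x2)
    (hy0 : 0 ≤ y0) (hy1 : 0 ≤ y1) (hy2 : 0 ≤ y2)
    (h : x2 * y0 + x0 * y2 ≤ 2 * (x1 * y1)) :
    PartSync (F3 x0 x1 x2) (F3 y0 y1 y2) := by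
  intro m n hnm
  by_cases hc : m = 1 ∧ n = 1
  · obtain ⟨hm, hn⟩ := hc
    subst hm hn
    norm_num [F3]
    linarith
  · have key : (2 : ℤ) < m + 1 ∨ n - 1 < 0 := by omega
    have h1 : F3 x0 x1 x2 (m + 1) * F3 y0 y1 y2 (n - 1) = 0 := by
      rcases key with hk | hk
      · rw [F3_zero (Or.inr hk), zero_mul]
      · rw [F3_zero (Or.inl hk), mul_zero]
    have h2 : F3 x0 x1 x2 (n - 1) * F3 y0 y1 y2 (m + 1) = 0 := by
      rcases key with hk | hk
      · rw [F3_zero (Or.inr hk), mul_zero]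
      · rw [F3_zero (Or.inl hk), zero_mul]
    rw [h1, h2, add_zero]
    have := F3_nonneg hx0 hx1 hx2 (x := x0)
    exact add_nonneg
      (mul_nonneg (F3_nonneg hx0 hx1 hx2 m) (F3_nonneg hy0 hy1 hy2 n))
      (mul_nonneg (F3_nonneg hx0 hx1 hx2 n) (F3_nonneg hy0 hy1 hy2 m))

theorem stmt4 :
    let A : ℤ → ℝ := fun k => if k = 0 then 1 else if k = 1 then 2 else if k = 2 then 3 else 0
    let B : ℤ → ℝ := fun k => if k = 0 then 1 else if k = 1 then 3 else if k = 2 then 8 else 0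
    let C : ℤ → ℝ := fun k => if k = 0 then 1 else if k = 1 then 4 else if k = 2 then 15 else 0
    PartSync A B ∧ PartSync B C ∧ ¬ PartSync A C := by
  refine ⟨?_, ?_, ?_⟩
  · show PartSync (F3 1 2 3) (F3 1 3 8)
    exact partSync_F3 (by norm_num) (by norm_num) (by norm_num) (by norm_num) (by norm_num)
      (by norm_num) (by norm_num)
  · show PartSync (F3 1 3 8) (F3 1 4 15)
    exact partSync_F3 (by norm_num) (by norm_num) (by norm_num) (by norm_num) (by norm_num)
      (by norm_num) (by norm_num)
  · intro h
    have := h 1 1 le_rfl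
    norm_num at this
end

section
/- Let A and B be nonzero log-concave nonnegative sequences without internal zeros, with head indices h(A), h(B) (the index of the first positive term) and tail indices t(A), t(B) (the index of the last positive term). If A and B are partially synchronized, then |h(A) - h(B)| ≤ 1 and |t(A) - t(B)| ≤ 1. -/
theorem stmt5 (A B : ℤ → ℝ) (hA : Nonneg A) (hB : Nonneg B)
    (hAlc : LogConcave A) (hAnz : NoInternalZeros A)
    (hBlc : LogConcave B) (hBnz : NoInternalZeros B)
    (hA' : ℤ) (tA : ℤ) (hB' : ℤ) (tB : ℤ)
    (hhA : 0 < A hA' ∧ ∀ k < hA', A k = 0)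
    (htA : 0 < A tA ∧ ∀ k > tA, A k = 0)
    (hhB : 0 < B hB' ∧ ∀ k < hB', B k = 0)
    (htB : 0 < B tB ∧ ∀ k > tB, B k = 0)
    (hps : PartSync A B) :
    |hA' - hB'| ≤ 1 ∧ |tA - tB| ≤ 1 := by
  obtain ⟨hApos, hAz⟩ := hhA
  obtain ⟨tApos, tAz⟩ := htA
  obtain ⟨hBpos, hBz⟩ := hhB
  obtain ⟨tBpos, tBz⟩ := htB
  constructor
  · rw [abs_le]
    constructor
    · -- rule out hB' ≥ hA' + 2
      by_contra h
      push_neg at h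
      have H := hps (hB' - 1) (hA' + 1) (by omega)
      simp only [show hB' - 1 + 1 = hB' from by ring,
        show hA' + 1 - 1 = hA' from by ring] at H
      rw [hBz hA' (by omega), hBz (hA' + 1) (by omega),
        hBz (hB' - 1) (by omega)] at H
      simp only [mul_zero, zero_add, add_zero] at H
      nlinarith [mul_pos hApos hBpos]
    · -- rule out hA' ≥ hB' + 2
      by_contra h
      push_neg at h
      have H := hps (hA' - 1) (hB' + 1) (by omega)
      simp only [show hA' - 1 + 1 = hA' from by ring,
        show hB' + 1 - 1 = hB' from by ring] at H
      rw [hAz hB' (by omega), hAz (hB' + 1) (by omega),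
        hAz (hA' - 1) (by omega)] at H
      simp only [zero_mul, zero_add, add_zero] at H
      nlinarith [mul_pos hApos hBpos]
  · rw [abs_le]
    constructor
    · -- rule out tB ≥ tA + 2
      by_contra h
      push_neg at h
      have H := hps (tB - 1) (tA + 1) (by omega)
      simp only [show tB - 1 + 1 = tB from by ring,
        show tA + 1 - 1 = tA from by ring] at H
      rw [tAz (tA + 1) (by omega), tAz (tB - 1) (by omega), tAz tB (by omega)] at H
      simp only [zero_mul, mul_zero, zero_add, add_zero] at H
      nlinarith [mul_pos tApos tBpos]
    · -- rule out tA ≥ tB + 2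
      by_contra h
      push_neg at h
      have H := hps (tA - 1) (tB + 1) (by omega)
      simp only [show tA - 1 + 1 = tA from by ring,
        show tB + 1 - 1 = tB from by ring] at H
      rw [tBz (tB + 1) (by omega), tBz (tA - 1) (by omega), tBz tA (by omega)] at H
      simp only [zero_mul, mul_zero, zero_add, add_zero] at H
      nlinarith [mul_pos tApos tBpos]
end

section
/- Let A and B be nonzero log-concave nonnegative sequences without internal zeros. Then A is partially synchronized with B if and only if: (i) |h(A) - h(B)| ≤ 1; (ii) |t(A) - t(B)| ≤ 1; and (iii) the inequality a_m b_n + a_n b_m ≥ a_{m+1}b_{n-1} + a_{n-1}b_{m+1} holds for all integers m ≥ n with max{h(A), h(B)} ≤ m ≤ max{t(A), t(B)} − 1 and min{h(A), h(B)} + 1 ≤ n ≤ min{t(A), t(B)}. -/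
theorem stmt6 (A B : ℤ → ℝ) (hA : Nonneg A) (hB : Nonneg B)
    (hAlc : LogConcave A) (hAnz : NoInternalZeros A)
    (hBlc : LogConcave B) (hBnz : NoInternalZeros B)
    (hA' tA hB' tB : ℤ)
    (hhA : 0 < A hA' ∧ ∀ k < hA', A k = 0)
    (htA : 0 < A tA ∧ ∀ k > tA, A k = 0)
    (hhB : 0 < B hB' ∧ ∀ k < hB', B k = 0)
    (htB : 0 < B tB ∧ ∀ k > tB, B k = 0) :
    PartSync A B ↔
      (|hA' - hB'| ≤ 1 ∧ |tA - tB| ≤ 1 ∧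
        ∀ m n : ℤ, n ≤ m →
          max hA' hB' ≤ m → m ≤ max tA tB - 1 →
          min hA' hB' + 1 ≤ n → n ≤ min tA tB →
          A (m + 1) * B (n - 1) + A (n - 1) * B (m + 1) ≤ A m * B n + A n * B m) := by
  obtain ⟨hApos, hAzlt⟩ := hhA
  obtain ⟨hAtpos, hAzgt⟩ := htA
  obtain ⟨hBpos, hBzlt⟩ := hhB
  obtain ⟨hBtpos, hBzgt⟩ := htB
  have hAle : hA' ≤ tA := by
    by_contra h
    push_neg at h
    exact absurd (hAzlt tA h) (ne_of_gt hAtpos)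
  have hBle : hB' ≤ tB := by
    by_contra h
    push_neg at h
    exact absurd (hBzlt tB h) (ne_of_gt hBtpos)
  have posA' : ∀ k : ℤ, 0 < A k → hA' ≤ k ∧ k ≤ tA := by
    intro k hk
    constructor
    · by_contra h
      push_neg at h
      rw [hAzlt k h] at hk
      exact lt_irrefl 0 hk
    · by_contra h
      push_neg at h
      rw [hAzgt k h] at hk
      exact lt_irrefl 0 hk
  have posB' : ∀ k : ℤ, 0 < B k → hB' ≤ k ∧ k ≤ tB := by
    intro k hk
    constructor
    · by_contra h
      push_neg at h
      rw [hBzlt k h] at hk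
      exact lt_irrefl 0 hk
    · by_contra h
      push_neg at h
      rw [hBzgt k h] at hk
      exact lt_irrefl 0 hk
  constructor
  · intro hPS
    refine ⟨?_, ?_, fun m n hmn _ _ _ _ => hPS m n hmn⟩
    · rw [abs_le]
      constructor
      · by_contra h
        push_neg at h
        have key := hPS (hB' - 1) (hA' + 1) (by omega)
        have e1 : B (hA' + 1) = 0 := hBzlt _ (by omega)
        have e2 : B (hB' - 1) = 0 := hBzlt _ (by omega)
        rw [show hB' - 1 + 1 = hB' by ring, show hA' + 1 - 1 = hA' by ring,
          e1, e2, mul_zero, mul_zero, add_zero] at key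
        nlinarith [mul_pos hApos hBpos, mul_nonneg (hA hB') (hB hA')]
      · by_contra h
        push_neg at h
        have key := hPS (hA' - 1) (hB' + 1) (by omega)
        have e1 : A (hB' + 1) = 0 := hAzlt _ (by omega)
        have e2 : A (hA' - 1) = 0 := hAzlt _ (by omega)
        rw [show hA' - 1 + 1 = hA' by ring, show hB' + 1 - 1 = hB' by ring,
          e1, e2, zero_mul, zero_mul, add_zero] at key
        nlinarith [mul_pos hApos hBpos, mul_nonneg (hA hB') (hB hA')]
    · rw [abs_le]
      constructor
      · by_contra h
        push_neg at h
        have key := hPS (tB - 1) (tA + 1) (by omega)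
        have e1 : A (tB - 1) = 0 := hAzgt _ (by omega)
        have e2 : A (tA + 1) = 0 := hAzgt _ (by omega)
        rw [show tB - 1 + 1 = tB by ring, show tA + 1 - 1 = tA by ring,
          e1, e2, zero_mul, zero_mul, add_zero] at key
        nlinarith [mul_pos hAtpos hBtpos, mul_nonneg (hA tB) (hB tA)]
      · by_contra h
        push_neg at h
        have key := hPS (tA - 1) (tB + 1) (by omega)
        have e1 : B (tB + 1) = 0 := hBzgt _ (by omega)
        have e2 : B (tA - 1) = 0 := hBzgt _ (by omega)
        rw [show tA - 1 + 1 = tA by ring, show tB + 1 - 1 = tB by ring,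
          e1, e2, mul_zero, mul_zero, add_zero] at key
        nlinarith [mul_pos hAtpos hBtpos, mul_nonneg (hA tB) (hB tA)]
  · rintro ⟨hh, ht, hbox⟩
    rw [abs_le] at hh ht
    obtain ⟨hh1, hh2⟩ := hh
    obtain ⟨ht1, ht2⟩ := ht
    have hbox' : ∀ m n : ℤ, n ≤ m → hA' ≤ m → hB' ≤ m →
        (m ≤ tA - 1 ∨ m ≤ tB - 1) → (hA' + 1 ≤ n ∨ hB' + 1 ≤ n) →
        n ≤ tA → n ≤ tB →
        A (m + 1) * B (n - 1) + A (n - 1) * B (m + 1) ≤ A m * B n + A n * B m := by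
      intro m n h0 h1 h2 h3 h4 h5 h6
      refine hbox m n h0 (max_le h1 h2) ?_ ?_ (le_min h5 h6)
      · rcases h3 with h | h
        · have := le_max_left tA tB; linarith
        · have := le_max_right tA tB; linarith
      · rcases h4 with h | h
        · have := min_le_left hA' hB'; linarith
        · have := min_le_right hA' hB'; linarith
    intro m n hmn
    by_cases h1 : 0 < A (m + 1) * B (n - 1)
    · have h1A : 0 < A (m + 1) := by
        rcases mul_pos_iff.mp h1 with ⟨hx, _⟩ | ⟨_, hy⟩
        · exact hx
        · linarith [hB (n - 1)]
      have h1B : 0 < B (n - 1) := by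
        rcases mul_pos_iff.mp h1 with ⟨_, hy⟩ | ⟨hx, _⟩
        · exact hy
        · linarith [hA (m + 1)]
      obtain ⟨b1, b2⟩ := posA' _ h1A
      obtain ⟨b3, b4⟩ := posB' _ h1B
      by_cases h2 : 0 < A (n - 1) * B (m + 1)
      · have h2A : 0 < A (n - 1) := by
          rcases mul_pos_iff.mp h2 with ⟨hx, _⟩ | ⟨_, hy⟩
          · exact hx
          · linarith [hB (m + 1)]
        have h2B : 0 < B (m + 1) := by
          rcases mul_pos_iff.mp h2 with ⟨_, hy⟩ | ⟨hx, _⟩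
          · exact hy
          · linarith [hA (n - 1)]
        obtain ⟨c1, c2⟩ := posA' _ h2A
        obtain ⟨c3, c4⟩ := posB' _ h2B
        exact hbox' m n hmn (by omega) (by omega) (by omega) (by omega)
          (by omega) (by omega)
      · exact hbox' m n hmn (by omega) (by omega) (by omega) (by omega)
          (by omega) (by omega)
    · by_cases h2 : 0 < A (n - 1) * B (m + 1)
      · have h2A : 0 < A (n - 1) := by
          rcases mul_pos_iff.mp h2 with ⟨hx, _⟩ | ⟨_, hy⟩
          · exact hx
          · linarith [hB (m + 1)]
        have h2B : 0 < B (m + 1) := by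
          rcases mul_pos_iff.mp h2 with ⟨_, hy⟩ | ⟨hx, _⟩
          · exact hy
          · linarith [hA (n - 1)]
        obtain ⟨c1, c2⟩ := posA' _ h2A
        obtain ⟨c3, c4⟩ := posB' _ h2B
        exact hbox' m n hmn (by omega) (by omega) (by omega) (by omega)
          (by omega) (by omega)
      · push_neg at h1 h2
        have r1 : 0 ≤ A m * B n := mul_nonneg (hA m) (hB n)
        have r2 : 0 ≤ A n * B m := mul_nonneg (hA n) (hB m)
        linarith
end

section
/- Let A = (a_k) and B = (b_k) be log-concave nonnegative sequences that are partially synchronized. Then for any nonnegative reals u and v, the sequence uA + vB = (u a_k + v b_k) is log-concave. -/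
theorem stmt7 (A B : ℤ → ℝ) (hA : Nonneg A) (hB : Nonneg B)
    (hAlc : LogConcave A) (hBlc : LogConcave B)
    (hps : PartSync A B) (u v : ℝ) (hu : 0 ≤ u) (hv : 0 ≤ v) :
    LogConcave (fun k => u * A k + v * B k) := by
  intro k
  have h1 := hAlc k
  have h2 := hBlc k
  have h3 := hps k k le_rfl
  have hA1 := hA (k-1); have hA2 := hA (k+1)
  have hB1 := hB (k-1); have hB2 := hB (k+1)
  have huv : 0 ≤ u * v := mul_nonneg hu hv
  simp only
  nlinarith [mul_le_mul_of_nonneg_left h1 (mul_nonneg hu hu),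
    mul_le_mul_of_nonneg_left h2 (mul_nonneg hv hv),
    mul_le_mul_of_nonneg_left h3 huv]
end

section
/- Let A, B be partially synchronized sequences of nonnegative reals and fix integers m ≥ n. Define f(p,q) = a_p b_q + a_q b_p and g(k,l) = f(m−k, n−l) − f(m+1−l, n−1−k). Then g(k,l) ≥ 0 for all integers k ≥ l. -/
noncomputable def fAB (A B : ℤ → ℝ) (p q : ℤ) : ℝ := A p * B q + A q * B p

noncomputable def gAB (A B : ℤ → ℝ) (m n k l : ℤ) : ℝ :=
  fAB A B (m - k) (n - l) - fAB A B (m + 1 - l) (n - 1 - k)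

lemma fAB_step (A B : ℤ → ℝ) (hps : PartSync A B) (p q : ℤ) (h : q ≤ p) :
    fAB A B (p + 1) (q - 1) ≤ fAB A B p q := hps p q h

lemma fAB_chain (A B : ℤ → ℝ) (hps : PartSync A B) :
    ∀ t : ℕ, ∀ p q : ℤ, q ≤ p → fAB A B (p + t) (q - t) ≤ fAB A B p q := by
  intro t
  induction t with
  | zero => intro p q h; simp
  | succ t ih =>
    intro p q h
    have h1 := ih p q h
    have h2 := fAB_step A B hps (p + t) (q - t) (by omega)
    have e1 : p + ((t : ℤ) + 1) = (p + t) + 1 := by ring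
    have e2 : q - ((t : ℤ) + 1) = (q - t) - 1 := by ring
    calc fAB A B (p + (t + 1 : ℕ)) (q - (t + 1 : ℕ))
        = fAB A B ((p + t) + 1) ((q - t) - 1) := by push_cast; rw [e1, e2]
      _ ≤ fAB A B (p + t) (q - t) := h2
      _ ≤ fAB A B p q := h1

lemma fAB_comm (A B : ℤ → ℝ) (p q : ℤ) : fAB A B p q = fAB A B q p := by
  unfold fAB; ring

theorem stmt11 (A B : ℤ → ℝ) (hA : Nonneg A) (hB : Nonneg B)
    (hps : PartSync A B) (m n : ℤ) (hmn : n ≤ m) :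
    ∀ k l : ℤ, l ≤ k → 0 ≤ gAB A B m n k l := by
  intro k l hlk
  unfold gAB
  rw [sub_nonneg]
  rcases le_or_gt (n - l) (m - k) with hc | hc
  · have t : ℕ := (k - l + 1).toNat
    have htv : ((k - l + 1).toNat : ℤ) = k - l + 1 := Int.toNat_of_nonneg (by omega)
    have := fAB_chain A B hps (k - l + 1).toNat (m - k) (n - l) hc
    rw [htv] at this
    have e1 : m - k + (k - l + 1) = m + 1 - l := by ring
    have e2 : n - l - (k - l + 1) = n - 1 - k := by ring
    rwa [e1, e2] at this
  · have htv : ((m - n + 1).toNat : ℤ) = m - n + 1 := Int.toNat_of_nonneg (by omega)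
    have := fAB_chain A B hps (m - n + 1).toNat (n - l) (m - k) (le_of_lt hc)
    rw [htv] at this
    have e1 : n - l + (m - n + 1) = m + 1 - l := by ring
    have e2 : m - k - (m - n + 1) = n - 1 - k := by ring
    rw [e1, e2] at this
    rw [fAB_comm A B (m - k) (n - l)]
    exact this
end

section
/- Let A, B, C be nonzero log-concave nonnegative sequences without internal zeros (with finitely many nonzero terms each). If A and B are partially synchronized, then the convolutions A*C and B*C are partially synchronized. -/
private lemma chainC (C : ℤ → ℝ) (hClc : LogConcave C) :
    ∀ (r : ℕ) (j : ℤ), (∀ t : ℤ, j - 1 ≤ t → t ≤ j + r + 1 → 0 < C t) →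
      C (j + r + 1) * C (j - 1) ≤ C (j + r) * C j := by
  intro r
  induction r with
  | zero =>
    intro j hpos
    have h := hClc j
    have h1 : (0:ℝ) ≤ C (j-1) := le_of_lt (hpos (j-1) (by omega) (by omega))
    push_cast
    simp only [add_zero]
    nlinarith [h]
  | succ r ih =>
    intro j hpos
    have IH := ih j (fun t h1 h2 => hpos t h1 (by push_cast at h2 ⊢; omega))
    have lc := hClc (j + r + 1)
    have p0 : 0 < C (j + r) := hpos _ (by omega) (by push_cast; omega)
    have p1 : 0 < C (j + r + 1) := hpos _ (by omega) (by push_cast; omega)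
    have p2 : 0 < C (j - 1) := hpos _ (by omega) (by push_cast; omega)
    have p3 : 0 < C j := hpos _ (by omega) (by push_cast; omega)
    have e1 : j + r + 1 - 1 = j + r := by ring
    have e2 : j + ((r:ℤ) + 1) + 1 = j + r + 1 + 1 := by ring
    have e3 : j + ((r:ℤ) + 1) = j + r + 1 := by ring
    rw [e1] at lc
    push_cast
    rw [e2, e3]
    nlinarith [mul_le_mul_of_nonneg_right lc (le_of_lt p3),
      mul_le_mul_of_nonneg_left IH (le_of_lt (hpos (j+r+1+1) (by omega) (by push_cast; omega)))]

private lemma Cineq (C : ℤ → ℝ) (hC : Nonneg C) (hClc : LogConcave C) (hCnz : NoInternalZeros C) :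
    ∀ i j : ℤ, j ≤ i → C (i + 1) * C (j - 1) ≤ C i * C j := by
  intro i j hji
  rcases eq_or_lt_of_le (mul_nonneg (hC (i+1)) (hC (j-1))) with h0 | hpos
  · rw [← h0]; exact mul_nonneg (hC i) (hC j)
  · have hall : ∀ t : ℤ, j - 1 ≤ t → t ≤ i + 1 → 0 < C t := by
      intro t h1 h2
      exact hCnz (j-1) (i+1) t (by omega) (by rw [mul_comm]; exact hpos) h1 h2
    have hr : i = j + ((i - j).toNat : ℤ) := by
      have := Int.toNat_of_nonneg (by omega : (0:ℤ) ≤ i - j); omega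
    have := chainC C hClc (i - j).toNat j (by rw [← hr]; intro t h1 h2; exact hall t h1 (by omega))
    rw [← hr] at this
    exact this

private lemma spreadS (A B : ℤ → ℝ) (hps : PartSync A B) :
    ∀ (t : ℕ) (x y : ℤ), y ≤ x →
      A (x + t) * B (y - t) + A (y - t) * B (x + t) ≤ A x * B y + A y * B x := by
  intro t
  induction t with
  | zero => intro x y _; norm_num
  | succ t ih =>
    intro x y hyx
    have step := hps (x + t) (y - t) (by omega)
    have e1 : x + ((t:ℤ) + 1) = x + t + 1 := by ring
    have e2 : y - ((t:ℤ) + 1) = y - t - 1 := by ring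
    push_cast
    rw [e1, e2]
    linarith [ih x y hyx]

theorem stmt12 (A B C : ℤ → ℝ)
    (hA : Nonneg A) (hB : Nonneg B) (hC : Nonneg C)
    (hAfin : (Function.support A).Finite) (hBfin : (Function.support B).Finite)
    (hCfin : (Function.support C).Finite)
    (hAne : ∃ k, A k ≠ 0) (hBne : ∃ k, B k ≠ 0) (hCne : ∃ k, C k ≠ 0)
    (hAlc : LogConcave A) (hAnz : NoInternalZeros A)
    (hBlc : LogConcave B) (hBnz : NoInternalZeros B)
    (hClc : LogConcave C) (hCnz : NoInternalZeros C)
    (hps : PartSync A B) :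
    PartSync (conv A C) (conv B C) := by
  classical
  intro m n hnm
  set U : Finset ℤ := hAfin.toFinset ∪ hBfin.toFinset with hUdef
  have hAU : ∀ k : ℤ, k ∉ U → A k = 0 := by
    intro k hk
    by_contra h
    exact hk (Finset.mem_union_left _ (hAfin.mem_toFinset.mpr h))
  have hBU : ∀ k : ℤ, k ∉ U → B k = 0 := by
    intro k hk
    by_contra h
    exact hk (Finset.mem_union_right _ (hBfin.mem_toFinset.mpr h))
  have hconvA : ∀ r : ℤ, conv A C r = ∑ k ∈ U, A k * C (r - k) := by
    intro r
    apply finsum_eq_sum_of_support_subset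
    intro k hk
    simp only [Function.mem_support] at hk
    have hA' : A k ≠ 0 := fun h => hk (by rw [h]; ring)
    exact Finset.mem_coe.mpr (Finset.mem_union_left _ (hAfin.mem_toFinset.mpr hA'))
  have hconvB : ∀ r : ℤ, conv B C r = ∑ k ∈ U, B k * C (r - k) := by
    intro r
    apply finsum_eq_sum_of_support_subset
    intro k hk
    simp only [Function.mem_support] at hk
    have hB' : B k ≠ 0 := fun h => hk (by rw [h]; ring)
    exact Finset.mem_coe.mpr (Finset.mem_union_right _ (hBfin.mem_toFinset.mpr hB'))
  set E : ℤ × ℤ → ℝ :=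
    fun p => C (m - p.1) * C (n - p.2) - C (m + 1 - p.1) * C (n - 1 - p.2) with hE
  set S : ℤ × ℤ → ℝ := fun p => A p.1 * B p.2 + A p.2 * B p.1 with hS
  set f : ℤ × ℤ → ℝ := fun p => S p * E p with hf
  set σ : ℤ × ℤ → ℤ × ℤ := fun p => (p.2 + (m - n) + 1, p.1 - (m - n) - 1) with hσ
  have expand : ∀ r s : ℤ, conv A C r * conv B C s =
      ∑ p ∈ U ×ˢ U, A p.1 * C (r - p.1) * (B p.2 * C (s - p.2)) := by
    intro r s
    rw [hconvA, hconvB, Finset.sum_mul_sum]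
    exact (Finset.sum_product U U
      (fun p => A p.1 * C (r - p.1) * (B p.2 * C (s - p.2)))).symm
  have key : conv A C m * conv B C n + conv A C n * conv B C m
      - (conv A C (m+1) * conv B C (n-1) + conv A C (n-1) * conv B C (m+1))
      = ∑ p ∈ U ×ˢ U, (A p.1 * B p.2 * E p + A p.1 * B p.2 * E (p.2, p.1)) := by
    rw [expand m n, expand n m, expand (m+1) (n-1), expand (n-1) (m+1),
      ← Finset.sum_add_distrib, ← Finset.sum_add_distrib, ← Finset.sum_sub_distrib]
    apply Finset.sum_congr rfl
    intro p _
    simp only [hE]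
    ring
  have sym : ∑ p ∈ U ×ˢ U, (A p.1 * B p.2 * E p + A p.1 * B p.2 * E (p.2, p.1))
      = ∑ p ∈ U ×ˢ U, f p := by
    rw [Finset.sum_add_distrib]
    have e2 : ∑ p ∈ U ×ˢ U, (A p.1 * B p.2 * E (p.2, p.1))
        = ∑ p ∈ U ×ˢ U, (A p.2 * B p.1 * E p) := by
      calc ∑ p ∈ U ×ˢ U, (A p.1 * B p.2 * E (p.2, p.1))
          = ∑ x ∈ U, ∑ y ∈ U, A x * B y * E (y, x) :=
            Finset.sum_product U U (fun p => A p.1 * B p.2 * E (p.2, p.1))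
        _ = ∑ y ∈ U, ∑ x ∈ U, A x * B y * E (y, x) := Finset.sum_comm
        _ = ∑ p ∈ U ×ˢ U, (A p.2 * B p.1 * E p) :=
            (Finset.sum_product U U (fun p => A p.2 * B p.1 * E p)).symm
    rw [e2, ← Finset.sum_add_distrib]
    apply Finset.sum_congr rfl
    intro p _
    simp only [hf, hS]
    ring
  set W : Finset (ℤ × ℤ) := (U ×ˢ U) ∪ (U ×ˢ U).image σ with hW
  have hinv : ∀ p : ℤ × ℤ, σ (σ p) = p := by
    intro p
    simp only [hσ]
    exact Prod.ext (by ring) (by ring)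
  have hWclosed : ∀ p ∈ W, σ p ∈ W := by
    intro p hp
    rcases Finset.mem_union.mp hp with h | h
    · exact Finset.mem_union_right _ (Finset.mem_image_of_mem σ h)
    · rcases Finset.mem_image.mp h with ⟨q, hq, hqe⟩
      rw [← hqe, hinv]
      exact Finset.mem_union_left _ hq
  have hfzero : ∀ p : ℤ × ℤ, p ∉ U ×ˢ U → f p = 0 := by
    intro p hp
    have hSz : A p.1 * B p.2 + A p.2 * B p.1 = 0 := by
      by_cases h1 : p.1 ∈ U
      · have h2 : p.2 ∉ U := fun h2 => hp (Finset.mem_product.mpr ⟨h1, h2⟩)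
        rw [hAU _ h2, hBU _ h2]; ring
      · rw [hAU _ h1, hBU _ h1]; ring
    simp only [hf, hS]
    rw [hSz, zero_mul]
  have extW : ∑ p ∈ U ×ˢ U, f p = ∑ p ∈ W, f p :=
    Finset.sum_subset Finset.subset_union_left (fun p _ hp => hfzero p hp)
  set Wp := W.filter (fun p => n - p.2 ≤ m - p.1) with hWp
  set Wm := W.filter (fun p => m - p.1 ≤ n - p.2 - 2) with hWm
  have split : ∑ p ∈ W, f p
      = ∑ p ∈ Wp, f p + ∑ p ∈ W.filter (fun p => ¬ (n - p.2 ≤ m - p.1)), f p :=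
    (Finset.sum_filter_add_sum_filter_not W _ f).symm
  have hWnm : ∑ p ∈ W.filter (fun p => ¬ (n - p.2 ≤ m - p.1)), f p = ∑ p ∈ Wm, f p := by
    apply (Finset.sum_subset ?_ ?_).symm
    · intro p hp
      rw [hWm, Finset.mem_filter] at hp
      rw [Finset.mem_filter]
      exact ⟨hp.1, by omega⟩
    · intro p hp hpm
      rw [Finset.mem_filter] at hp
      have hc : ¬ (m - p.1 ≤ n - p.2 - 2) := fun hc =>
        hpm (by rw [hWm, Finset.mem_filter]; exact ⟨hp.1, hc⟩)
      have hp2 := hp.2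
      have h1 : m + 1 - p.1 = n - p.2 := by omega
      have h2 : n - 1 - p.2 = m - p.1 := by omega
      simp only [hf, hE]
      rw [h1, h2]
      ring
  have hmaps1 : ∀ p ∈ Wp, σ p ∈ Wm := by
    intro p hp
    rw [hWp, Finset.mem_filter] at hp
    rw [hWm, Finset.mem_filter]
    refine ⟨hWclosed p hp.1, ?_⟩
    have := hp.2
    simp only [hσ]
    omega
  have hmaps2 : ∀ p ∈ Wm, σ p ∈ Wp := by
    intro p hp
    rw [hWm, Finset.mem_filter] at hp
    rw [hWp, Finset.mem_filter]
    refine ⟨hWclosed p hp.1, ?_⟩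
    have := hp.2
    simp only [hσ]
    omega
  have hpair : ∑ p ∈ Wm, f p = ∑ p ∈ Wp, f (σ p) :=
    (Finset.sum_nbij' σ σ hmaps1 hmaps2 (fun p _ => hinv p) (fun p _ => hinv p)
      (fun p _ => rfl)).symm
  have hpt : ∀ p ∈ Wp, 0 ≤ f p + f (σ p) := by
    intro p hp
    rw [hWp, Finset.mem_filter] at hp
    obtain ⟨k, l⟩ := p
    have hd : n - l ≤ m - k := hp.2
    have hEσ : E (σ (k, l)) = - E (k, l) := by
      simp only [hE, hσ]
      have e1 : m - (l + (m - n) + 1) = n - 1 - l := by ring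
      have e2 : n - (k - (m - n) - 1) = m + 1 - k := by ring
      have e3 : m + 1 - (l + (m - n) + 1) = n - l := by ring
      have e4 : n - 1 - (k - (m - n) - 1) = m - k := by ring
      rw [e1, e2, e3, e4]
      ring
    have hE0 : 0 ≤ E (k, l) := by
      have hci := Cineq C hC hClc hCnz (m - k) (n - l) hd
      simp only [hE]
      have e1 : m + 1 - k = (m - k) + 1 := by ring
      have e2 : n - 1 - l = (n - l) - 1 := by ring
      rw [e1, e2]
      linarith
    have hSle : S (σ (k, l)) ≤ S (k, l) := by
      rcases le_total l k with hlk | hkl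
      · have ht : (0:ℤ) ≤ l + (m - n) + 1 - k := by omega
        have hsp := spreadS A B hps (l + (m - n) + 1 - k).toNat k l hlk
        rw [Int.toNat_of_nonneg ht] at hsp
        have e1 : k + (l + (m - n) + 1 - k) = l + (m - n) + 1 := by ring
        have e2 : l - (l + (m - n) + 1 - k) = k - (m - n) - 1 := by ring
        rw [e1, e2] at hsp
        simp only [hS, hσ]
        linarith
      · have ht : (0:ℤ) ≤ m - n + 1 := by omega
        have hsp := spreadS A B hps (m - n + 1).toNat l k hkl
        rw [Int.toNat_of_nonneg ht] at hsp
        have e1 : l + (m - n + 1) = l + (m - n) + 1 := by ring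
        have e2 : k - (m - n + 1) = k - (m - n) - 1 := by ring
        rw [e1, e2] at hsp
        simp only [hS, hσ]
        linarith
    have hcomb : f (k, l) + f (σ (k, l)) = (S (k, l) - S (σ (k, l))) * E (k, l) := by
      simp only [hf]
      rw [hEσ]
      ring
    rw [hcomb]
    exact mul_nonneg (by linarith) hE0
  have total : 0 ≤ conv A C m * conv B C n + conv A C n * conv B C m
      - (conv A C (m+1) * conv B C (n-1) + conv A C (n-1) * conv B C (m+1)) := by
    rw [key, sym, extW, split, hWnm, hpair, ← Finset.sum_add_distrib]
    exact Finset.sum_nonneg hpt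
  linarith
end

section
/- The convolution of two log-concave nonnegative sequences without internal zeros (each with finitely many positive terms) is log-concave and has no internal zeros. -/
/-- spread inequality under full positivity, by induction. -/
lemma spread_pos (z : ℤ → ℝ) (hlc : LogConcave z) (l : ℤ) :
    ∀ k, l ≤ k → (∀ m, l - 1 ≤ m → m ≤ k + 1 → 0 < z m) →
      z (k + 1) * z (l - 1) ≤ z k * z l := by
  refine Int.le_induction ?_ ?_
  · intro hpos
    have h := hlc l
    nlinarith [h]
  · intro k hk IH hpos
    have hIH : z (k + 1) * z (l - 1) ≤ z k * z l :=
      IH (fun m h1 h2 => hpos m h1 (by omega))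
    have h2 : z k * z (k + 2) ≤ z (k + 1) ^ 2 := by
      have := hlc (k + 1)
      rw [show k + 1 - 1 = k from by ring, show k + 1 + 1 = k + 2 from by ring] at this
      exact this
    have hzk : 0 < z k := hpos k (by omega) (by omega)
    have hzk1 : 0 < z (k + 1) := hpos (k + 1) (by omega) (by omega)
    have hzk2 : 0 < z (k + 2) := hpos (k + 2) (by omega) (by omega)
    have hzl : 0 < z l := hpos l (by omega) (by omega)
    have hzl1 : 0 < z (l - 1) := hpos (l - 1) (by omega) (by omega)
    have key : (z (k + 1 + 1) * z (l - 1)) * (z k * z (k + 1)) ≤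
        (z (k + 1) * z l) * (z k * z (k + 1)) := by
      have hm := mul_le_mul h2 hIH (by positivity) (by positivity)
      rw [show k + 1 + 1 = k + 2 from by ring]
      nlinarith [hm]
    exact le_of_mul_le_mul_right key (by positivity)

/-- spread inequality: products decrease as indices spread out. -/
lemma spread (z : ℤ → ℝ) (hz : Nonneg z) (hlc : LogConcave z)
    (hnz : NoInternalZeros z) (k l : ℤ) (hlk : l ≤ k) :
    z (k + 1) * z (l - 1) ≤ z k * z l := by
  by_cases h : 0 < z (k + 1) * z (l - 1)
  · have hk1 : 0 < z (k + 1) := by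
      rcases mul_pos_iff.mp h with ⟨h1, h2⟩ | ⟨h1, h2⟩
      · exact h1
      · linarith [hz (k + 1)]
    have hl1 : 0 < z (l - 1) := by
      rcases mul_pos_iff.mp h with ⟨h1, h2⟩ | ⟨h1, h2⟩
      · exact h2
      · linarith [hz (l - 1)]
    exact spread_pos z hlc l k hlk
      (fun m h1 h2 => hnz (l - 1) (k + 1) m (by omega) (mul_pos hl1 hk1) h1 h2)
  · push_neg at h
    exact h.trans (mul_nonneg (hz k) (hz l))

lemma pos_on_interval (z : ℤ → ℝ) (hz : Nonneg z) (hnz : NoInternalZeros z)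
    (p q r : ℤ) (hp : 0 < z p) (hq : 0 < z q)
    (h1 : min p q ≤ r) (h2 : r ≤ max p q) : 0 < z r := by
  rcases lt_trichotomy p q with h | h | h
  · exact hnz p q r h (mul_pos hp hq) (by omega) (by omega)
  · have : r = p := by omega
    rwa [this]
  · exact hnz q p r h (mul_pos hq hp) (by omega) (by omega)

lemma conv_eq_sum (A B : ℤ → ℝ) (n : ℤ) (s : Finset ℤ)
    (hs : Function.support A ⊆ ↑s) :
    conv A B n = ∑ k ∈ s, A k * B (n - k) := by
  refine finsum_eq_sum_of_support_subset _ ?_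
  intro k hk
  apply hs
  simp only [Function.mem_support] at hk ⊢
  exact fun h => hk (by rw [h, zero_mul])

theorem stmt13 (A B : ℤ → ℝ) (hA : Nonneg A) (hB : Nonneg B)
    (hAfin : (Function.support A).Finite) (hBfin : (Function.support B).Finite)
    (hAlc : LogConcave A) (hAnz : NoInternalZeros A)
    (hBlc : LogConcave B) (hBnz : NoInternalZeros B) :
    LogConcave (conv A B) ∧ NoInternalZeros (conv A B) := by
  classical
  set sA : Finset ℤ := hAfin.toFinset with hsAdef
  have hsupA : Function.support A ⊆ ↑sA := by
    intro a ha; simpa [hsAdef] using ha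
  have hAzero : ∀ a : ℤ, a ∉ sA → A a = 0 := by
    intro a ha
    by_contra h
    exact ha (by simpa [hsAdef] using h)
  have hspreadA := spread A hA hAlc hAnz
  have hspreadB := spread B hB hBlc hBnz
  constructor
  · -- LogConcave
    intro n
    set t : Finset ℤ := sA ∪ sA.image (· + 1) ∪ sA.image (· - 1) with ht
    have hsub : sA ⊆ t := by
      intro a ha; simp [ht]; tauto
    have hsupt : Function.support A ⊆ ↑t := hsupA.trans (by exact_mod_cast hsub)
    have hcm : ∀ m, conv A B m = ∑ k ∈ t, A k * B (m - k) :=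
      fun m => conv_eq_sum A B m t hsupt
    set T : ℤ × ℤ → ℝ := fun p =>
      A p.1 * B (n - p.1) * (A p.2 * B (n - p.2)) -
        A p.1 * B (n - 1 - p.1) * (A p.2 * B (n + 1 - p.2)) with hT
    have hQ : conv A B n ^ 2 - conv A B (n - 1) * conv A B (n + 1) =
        ∑ p ∈ t ×ˢ t, T p := by
      rw [Finset.sum_product, sq, hcm, hcm, hcm, Finset.sum_mul_sum, Finset.sum_mul_sum,
        ← Finset.sum_sub_distrib]
      refine Finset.sum_congr rfl fun k _ => ?_
      rw [← Finset.sum_sub_distrib]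
    have hTsupp : ∀ p : ℤ × ℤ, p ∉ sA ×ˢ sA → T p = 0 := by
      intro p hp
      rw [Finset.mem_product] at hp
      push_neg at hp
      by_cases h1 : p.1 ∈ sA
      · have := hAzero p.2 (hp h1)
        simp [hT, this]
      · have := hAzero p.1 h1
        simp [hT, this]
    have hcore : ∑ p ∈ t ×ˢ t, T p = ∑ p ∈ sA ×ˢ sA, T p :=
      (Finset.sum_subset (Finset.product_subset_product hsub hsub)
        (fun p _ hp => hTsupp p hp)).symm
    have hR : ∑ p ∈ t ×ˢ t, T (p.2 - 1, p.1 + 1) = ∑ p ∈ sA ×ˢ sA, T p := by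
      have hv1 : sA.image (· - 1) ⊆ t := Finset.subset_union_right
      have hv2 : sA.image (· + 1) ⊆ t :=
        Finset.subset_union_right.trans Finset.subset_union_left
      have step1 : ∑ p ∈ t ×ˢ t, T (p.2 - 1, p.1 + 1) =
          ∑ p ∈ (sA.image (· - 1)) ×ˢ (sA.image (· + 1)), T (p.2 - 1, p.1 + 1) := by
        refine (Finset.sum_subset (Finset.product_subset_product hv1 hv2) ?_).symm
        intro p _ hp
        rw [Finset.mem_product] at hp
        push_neg at hp
        apply hTsupp
        rw [Finset.mem_product]
        intro ⟨ha, hb⟩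
        by_cases h1 : p.1 ∈ sA.image (· - 1)
        · have h2 := hp h1
          apply h2
          simp only [Finset.mem_image]
          exact ⟨p.2 - 1, ha, by ring⟩
        · apply h1
          simp only [Finset.mem_image]
          exact ⟨p.1 + 1, hb, by ring⟩
      rw [step1]
      refine Finset.sum_bij' (fun p _ => (p.2 - 1, p.1 + 1))
        (fun p _ => (p.2 - 1, p.1 + 1)) ?_ ?_ ?_ ?_ ?_
      · intro p hp
        rw [Finset.mem_product] at hp ⊢
        simp only [Finset.mem_image] at hp
        obtain ⟨⟨a, ha, ha'⟩, ⟨b, hb, hb'⟩⟩ := hp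
        constructor
        · simpa [← hb', show b + 1 - 1 = b from by ring] using hb
        · simpa [← ha', show a - 1 + 1 = a from by ring] using ha
      · intro p hp
        rw [Finset.mem_product] at hp
        rw [Finset.mem_product]
        simp only [Finset.mem_image]
        exact ⟨⟨p.2, hp.2, rfl⟩, ⟨p.1, hp.1, rfl⟩⟩
      · intro p _
        ext <;> simp <;> ring
      · intro p _
        ext <;> simp <;> ring
      · intro p _
        rfl
    have hUnn : ∀ p ∈ t ×ˢ t, 0 ≤ T p + T (p.2 - 1, p.1 + 1) := by
      rintro ⟨k, l⟩ _
      have hfact : T (k, l) + T (l - 1, k + 1) =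
          (A k * A l - A (k + 1) * A (l - 1)) *
            (B (n - k) * B (n - l) - B (n - 1 - k) * B (n + 1 - l)) := by
        simp only [hT]
        rw [show n - (l - 1) = n + 1 - l from by ring,
          show n - (k + 1) = n - 1 - k from by ring,
          show n - 1 - (l - 1) = n - l from by ring,
          show n + 1 - (k + 1) = n - k from by ring]
        ring
      rw [hfact]
      rcases le_or_gt l k with hle | hgt
      · -- l ≤ k : both factors nonneg
        have h1 : A (k + 1) * A (l - 1) ≤ A k * A l := hspreadA k l hle
        have h2' : B (n - 1 - k) * B (n + 1 - l) ≤ B (n - k) * B (n - l) := by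
          have h := hspreadB (n - l) (n - k) (by omega)
          rw [show n - l + 1 = n + 1 - l from by ring,
            show n - k - 1 = n - 1 - k from by ring] at h
          nlinarith [h]
        nlinarith [h1, h2']
      · rcases eq_or_lt_of_le (by omega : k + 1 ≤ l) with heq2 | hlt2
        · -- l = k + 1 : first factor zero
          have : A k * A l - A (k + 1) * A (l - 1) = 0 := by
            rw [← heq2, show k + 1 - 1 = k from by ring]
            ring
          rw [this, zero_mul]
        · -- k + 1 < l : both factors nonpos
          have h1 : A l * A k ≤ A (l - 1) * A (k + 1) := by
            have h := hspreadA (l - 1) (k + 1) (by omega)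
            rwa [show l - 1 + 1 = l from by ring, show k + 1 - 1 = k from by ring] at h
          have h2 : B (n - k) * B (n - l) ≤ B (n - 1 - k) * B (n + 1 - l) := by
            have h := hspreadB (n - k - 1) (n - l + 1) (by omega)
            rw [show n - k - 1 + 1 = n - k from by ring,
              show n - l + 1 - 1 = n - l from by ring,
              show n - k - 1 = n - 1 - k from by ring,
              show n - l + 1 = n + 1 - l from by ring] at h
            nlinarith [h]
          have hprod := mul_nonneg
            (neg_nonneg.mpr (sub_nonpos.mpr (by nlinarith [h1] :
              A k * A l ≤ A (k + 1) * A (l - 1))))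
            (neg_nonneg.mpr (sub_nonpos.mpr h2))
          nlinarith [hprod]
    have h2Q : 0 ≤ (conv A B n ^ 2 - conv A B (n - 1) * conv A B (n + 1)) * 2 := by
      have hs : ∑ p ∈ t ×ˢ t, (T p + T (p.2 - 1, p.1 + 1)) =
          ∑ p ∈ t ×ˢ t, T p + ∑ p ∈ t ×ˢ t, T (p.2 - 1, p.1 + 1) :=
        Finset.sum_add_distrib
      have hnn : 0 ≤ ∑ p ∈ t ×ˢ t, (T p + T (p.2 - 1, p.1 + 1)) :=
        Finset.sum_nonneg hUnn
      rw [hQ]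
      rw [hcore]
      linarith [hs ▸ hnn, hcore, hR]
    nlinarith [h2Q]
  · -- NoInternalZeros
    intro i j k hij hpos hik hkj
    have hconvnn : ∀ m, 0 ≤ conv A B m :=
      fun m => finsum_nonneg fun p => mul_nonneg (hA p) (hB (m - p))
    have hci : 0 < conv A B i := by
      rcases mul_pos_iff.mp hpos with ⟨h1, _⟩ | ⟨h1, _⟩
      · exact h1
      · linarith [hconvnn i]
    have hcj : 0 < conv A B j := by
      rcases mul_pos_iff.mp hpos with ⟨_, h2⟩ | ⟨_, h2⟩
      · exact h2
      · linarith [hconvnn j]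
    have hterm : ∀ m : ℤ, 0 < conv A B m → ∃ p, 0 < A p ∧ 0 < B (m - p) := by
      intro m hm
      by_contra h
      push_neg at h
      have hle : conv A B m ≤ 0 := by
        rw [conv_eq_sum A B m sA hsupA]
        refine Finset.sum_nonpos fun q _ => ?_
        rcases lt_or_ge 0 (A q) with hq | hq
        · exact mul_nonpos_iff.mpr (Or.inl ⟨hq.le, h q hq⟩)
        · exact mul_nonpos_iff.mpr (Or.inr ⟨hq, hB _⟩)
      linarith
    obtain ⟨p, hpA, hpB⟩ := hterm i hci
    obtain ⟨q, hqA, hqB⟩ := hterm j hcj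
    obtain ⟨r, hr1, hr2, hr3, hr4⟩ : ∃ r, min p q ≤ r ∧ r ≤ max p q ∧
        min (i - p) (j - q) ≤ k - r ∧ k - r ≤ max (i - p) (j - q) :=
      ⟨max (min p q) (k - max (i - p) (j - q)), by omega, by omega, by omega, by omega⟩
    have hAr : 0 < A r := pos_on_interval A hA hAnz p q r hpA hqA hr1 hr2
    have hBs : 0 < B (k - r) :=
      pos_on_interval B hB hBnz (i - p) (j - q) (k - r) hpB hqB hr3 hr4
    have hrmem : r ∈ sA := by
      simp [hsAdef, Function.mem_support]
      exact ne_of_gt hAr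
    rw [conv_eq_sum A B k sA hsupA]
    calc (0:ℝ) < A r * B (k - r) := mul_pos hAr hBs
      _ ≤ ∑ q ∈ sA, A q * B (k - q) :=
        Finset.single_le_sum (fun q _ => mul_nonneg (hA q) (hB _)) hrmem
end
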